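/- Let S be a numerical set with S ≠ ℕ such that S̃ ≠ ℕ. Then B(S̃) ≤ B(S) − m(S), with equality if and only if 1 ∉ S. -/
import Mathlib


open Set

def IsNumericalSet (S : Set ℕ) : Prop := 0 ∈ S ∧ Sᶜ.Finite

def IsNumericalSemigroup (S : Set ℕ) : Prop :=
  IsNumericalSet S ∧ ∀ a ∈ S, ∀ b ∈ S, a + b ∈ S

/-- The associated set `A(S) = {s ∈ S : s + S ⊆ S}`. -/
def A (S : Set ℕ) : Set ℕ := {s ∈ S | ∀ t ∈ S, s + t ∈ S}

/-- The Frobenius number: the largest gap of `S`. -/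
noncomputable def F (S : Set ℕ) : ℕ := sSup Sᶜ

/-- The base: the largest element of `S` below `F S`. -/
noncomputable def B (S : Set ℕ) : ℕ := sSup {s | s ∈ S ∧ s < F S}

/-- The multiplicity: the smallest positive element of `S`. -/
noncomputable def m (S : Set ℕ) : ℕ := sInf {s | s ∈ S ∧ 0 < s}

/-- The complement numerical set (for `S ≠ ℕ`). -/
noncomputable def Stilde (S : Set ℕ) : Set ℕ :=
  {x | ∃ s ∈ S, s ≤ B S ∧ x = B S - s} ∪ {n | B S ≤ n}

-- The complement operation, with the convention that the complement of ℕ is ℕ.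
open Classical in
noncomputable def complOp (S : Set ℕ) : Set ℕ :=
  if S = Set.univ then Set.univ else Stilde S

/-- The genus: the number of gaps. -/
noncomputable def genus (S : Set ℕ) : ℕ := Sᶜ.ncard

/-- The number of boxes with hook length 1. -/
noncomputable def c1 (S : Set ℕ) : ℕ := {n | n ∈ S ∧ n + 1 ∉ S}.ncard

/-- An atom: a positive element not a sum of two positive elements. -/
def IsAtomOf (S : Set ℕ) (a : ℕ) : Prop :=
  a ∈ S ∧ 0 < a ∧ ¬ ∃ x ∈ S, ∃ y ∈ S, 0 < x ∧ 0 < y ∧ a = x + y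

/-- A small atom: an atom smaller than the Frobenius number. -/
def IsSmallAtom (S : Set ℕ) (a : ℕ) : Prop := IsAtomOf S a ∧ a < F S

/-- The embedding dimension: the number of atoms. -/
noncomputable def numAtoms (S : Set ℕ) : ℕ := {a | IsAtomOf S a}.ncard

/-- Maximal embedding dimension. -/
def MaxED (S : Set ℕ) : Prop := numAtoms S = m S


theorem base_of_complement (S : Set ℕ) (hS : IsNumericalSet S) (hne : S ≠ Set.univ)
    (hne' : Stilde S ≠ Set.univ) :
    B (Stilde S) + m S ≤ B S ∧ (B (Stilde S) + m S = B S ↔ 1 ∉ S) := by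
  obtain ⟨h0, hfin⟩ := hS
  have hcne : Sᶜ.Nonempty := Set.nonempty_compl.mpr hne
  have hbdd : BddAbove Sᶜ := hfin.bddAbove
  have hFmem : F S ∉ S := Nat.sSup_mem hcne hbdd
  have hF0 : 0 < F S := by
    rcases Nat.eq_zero_or_pos (F S) with h | h
    · exact absurd (h ▸ h0) (h ▸ hFmem)
    · exact h
  -- B S
  have hTne : ({s | s ∈ S ∧ s < F S} : Set ℕ).Nonempty := ⟨0, h0, hF0⟩
  have hTbdd : BddAbove {s | s ∈ S ∧ s < F S} := ⟨F S, fun x hx => le_of_lt hx.2⟩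
  have hBmem : B S ∈ {s | s ∈ S ∧ s < F S} := Nat.sSup_mem hTne hTbdd
  obtain ⟨hBS, hBF⟩ := hBmem
  -- g := smallest gap
  set g := sInf Sᶜ with hgdef
  have hgmem : g ∉ S := Nat.sInf_mem hcne
  have hglt : ∀ k, k ∉ S → g ≤ k := fun k hk => Nat.sInf_le hk
  have hg1 : 1 ≤ g := by
    rcases Nat.eq_zero_or_pos g with h | h
    · exact absurd (h ▸ h0) (h ▸ hgmem)
    · exact h
  -- membership characterization of Stilde
  have hmem : ∀ x, x ∈ Stilde S ↔ B S - x ∈ S := by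
    intro x
    constructor
    · rintro (⟨s, hsS, hsB, rfl⟩ | hx)
      · rwa [Nat.sub_sub_self hsB]
      · have : B S - x = 0 := Nat.sub_eq_zero_of_le hx
        rwa [this]
    · intro hx
      by_cases hxB : B S ≤ x
      · exact Or.inr hxB
      · exact Or.inl ⟨B S - x, hx, Nat.sub_le _ _,
          (Nat.sub_sub_self (le_of_not_ge hxB)).symm⟩
  -- g < B S, using Stilde S ≠ univ
  have hgB : g < B S := by
    rcases lt_or_ge g (B S) with h | h
    · exact h
    · exfalso
      apply hne'
      ext x
      simp only [Set.mem_univ, iff_true]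
      rw [hmem]
      by_cases hk : B S - x ∈ S
      · exact hk
      · exfalso
        have := hglt _ hk
        have hle : B S - x ≤ B S := Nat.sub_le _ _
        have : g = B S := le_antisymm (le_trans this hle) h
        exact hgmem (this ▸ hBS)
  -- F (Stilde S) = B S - g
  have hcompl : ∀ x, x ∈ (Stilde S)ᶜ ↔ B S - x ∉ S := by
    intro x; rw [Set.mem_compl_iff, hmem]
  have hBgmem : B S - g ∈ (Stilde S)ᶜ := by
    rw [hcompl, Nat.sub_sub_self (le_of_lt hgB)]; exact hgmem
  have hub : ∀ x ∈ (Stilde S)ᶜ, x ≤ B S - g := by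
    intro x hx
    rw [hcompl] at hx
    have hxB : x < B S := by
      by_contra h
      push_neg at h
      rw [Nat.sub_eq_zero_of_le h] at hx
      exact hx h0
    have := hglt _ hx
    omega
  have hFt : F (Stilde S) = B S - g := by
    refine le_antisymm (csSup_le ⟨_, hBgmem⟩ hub) (le_csSup ⟨B S - g, hub⟩ hBgmem)
  -- s1 := smallest element of S greater than g
  set s1 := sInf {s | s ∈ S ∧ g < s} with hs1def
  have hs1ne : ({s | s ∈ S ∧ g < s} : Set ℕ).Nonempty := ⟨B S, hBS, hgB⟩
  have hs1mem : s1 ∈ {s | s ∈ S ∧ g < s} := Nat.sInf_mem hs1ne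
  obtain ⟨hs1S, hs1g⟩ := hs1mem
  have hs1B : s1 ≤ B S := Nat.sInf_le ⟨hBS, hgB⟩
  -- B (Stilde S) = B S - s1
  have hBt : B (Stilde S) = B S - s1 := by
    have hset : {x | x ∈ Stilde S ∧ x < F (Stilde S)}
        = {x | B S - x ∈ S ∧ x < B S - g} := by
      ext x; rw [Set.mem_setOf_eq, Set.mem_setOf_eq, hmem, hFt]
    have hmem' : B S - s1 ∈ {x | B S - x ∈ S ∧ x < B S - g} := by
      constructor
      · rwa [Nat.sub_sub_self hs1B]
      · omega
    have hub' : ∀ x ∈ {x | B S - x ∈ S ∧ x < B S - g}, x ≤ B S - s1 := by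
      rintro x ⟨hx1, hx2⟩
      have hxB : x < B S := by omega
      have hgx : g < B S - x := by omega
      have : s1 ≤ B S - x := Nat.sInf_le (Set.mem_setOf_eq ▸ ⟨hx1, hgx⟩)
      omega
    rw [B, hset]
    exact le_antisymm (csSup_le ⟨_, hmem'⟩ hub') (le_csSup ⟨B S - s1, hub'⟩ hmem')
  -- m S
  have hmne : ({s | s ∈ S ∧ 0 < s} : Set ℕ).Nonempty := ⟨B S, hBS, by omega⟩
  have hmmem : m S ∈ {s | s ∈ S ∧ 0 < s} := Nat.sInf_mem hmne
  obtain ⟨hmS, hm0⟩ := hmmem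
  have hms1 : m S ≤ s1 := Nat.sInf_le ⟨hs1S, by omega⟩
  constructor
  · rw [hBt]; omega
  · constructor
    · intro heq h1
      have : m S ≤ 1 := Nat.sInf_le ⟨h1, Nat.one_pos⟩
      rw [hBt] at heq
      omega
    · intro h1
      have hgle1 : g ≤ 1 := hglt 1 h1
      have hm2 : 2 ≤ m S := by
        rcases Nat.lt_or_ge (m S) 2 with h | h
        · interval_cases (m S) <;> simp_all
        · exact h
      have hs1m : s1 ≤ m S := Nat.sInf_le ⟨hmS, by omega⟩
      rw [hBt]
      omega
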